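/- Let ν be a stochastic dynamical system on a countable type S, and let u, w, v ∈ S. If the one-step transition probability from u to w satisfies ν(u, w) = p > 0, then τ_ν(u→v) ≤ (2/p) · τ_ν(w→v). (This is the quantitative core of the existence of a universal solver: a solver that first samples a program state w = x[A] with prior probability m(A) = p and then runs from it is slowed down by at most the factor 2/m(A) relative to the proper time from w.) -/

import Mathlib

open scoped ENNReal NNReal
/-- The probability of a trajectory `h = (s₁, …, sₙ)` under the transition kernel `ν`:
the product of the transition probabilities along adjacent pairs
(so a length-1 trajectory has probability 1). -/
def trajProb {S : Type*} (ν : S → S → NNReal) (h : List S) : NNReal :=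
  ((h.zip h.tail).map fun p => ν p.1 p.2).prod

/-- The proper time `τ_ν(u → v)`: the infimum, over all trajectories `h` from `u` to `v`
with positive probability, of `T(h) / ν(h)`, taken in `[0, ∞]`
(so it is `∞` if no such trajectory exists). -/
noncomputable def properTime {S : Type*} (ν : S → S → NNReal) (u v : S) : ℝ≥0∞ :=
  ⨅ h ∈ {h : List S | h.head? = some u ∧ h.getLast? = some v ∧ 0 < trajProb ν h},
    (h.length : ℝ≥0∞) / (trajProb ν h : ℝ≥0∞)

lemma trajProb_cons_cons {S : Type*} (ν : S → S → NNReal) (u w : S) (t : List S) :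
    trajProb ν (u :: w :: t) = ν u w * trajProb ν (w :: t) := by
  simp [trajProb]

/-- **Universal-solver slowdown bound.** If the one-step transition probability from `u`
to `w` is `ν u w = p > 0`, then `τ_ν(u→v) ≤ (2/p) · τ_ν(w→v)`. -/
theorem properTime_le_two_div_mul {S : Type*} [Countable S]
    (ν : S → S → NNReal) (hν : ∀ s : S, ∑' t : S, ν s t = 1)
    (u w v : S) (p : NNReal) (hp : 0 < p) (hstep : ν u w = p) :
    properTime ν u v ≤ (2 / (p : ℝ≥0∞)) * properTime ν w v := by
  have hp0 : (p : ℝ≥0∞) ≠ 0 := by exact_mod_cast hp.ne'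
  have hpt : (p : ℝ≥0∞) ≠ ∞ := ENNReal.coe_ne_top
  have ha0 : (2 / (p : ℝ≥0∞)) ≠ 0 := by
    simp [ENNReal.div_ne_zero, hpt]
  have hat : (2 / (p : ℝ≥0∞)) ≠ ∞ := by
    simp [ENNReal.div_eq_top, hp0]
  have key : ∀ h ∈ {h : List S | h.head? = some w ∧ h.getLast? = some v ∧ 0 < trajProb ν h},
      properTime ν u v ≤ 2 / (p : ℝ≥0∞) * ((h.length : ℝ≥0∞) / (trajProb ν h : ℝ≥0∞)) := by
    rintro h ⟨hh, hl, hq⟩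
    obtain ⟨t, rfl⟩ : ∃ t, h = w :: t := by
      cases h with
      | nil => simp at hh
      | cons a t =>
        simp only [List.head?_cons, Option.some.injEq] at hh
        exact ⟨t, by rw [hh]⟩
    have hq' : 0 < trajProb ν (u :: w :: t) := by
      rw [trajProb_cons_cons, hstep]
      exact mul_pos hp hq
    have hmem : (u :: w :: t) ∈ {h : List S | h.head? = some u ∧ h.getLast? = some v ∧
        0 < trajProb ν h} := ⟨rfl, by simpa [List.getLast?_cons_cons] using hl, hq'⟩
    refine le_trans (biInf_le _ hmem) ?_
    set n := (w :: t).length with hn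
    set q := trajProb ν (w :: t) with hqdef
    have hq0 : (q : ℝ≥0∞) ≠ 0 := by exact_mod_cast hq.ne'
    have hqt : (q : ℝ≥0∞) ≠ ∞ := ENNReal.coe_ne_top
    have hcast : (trajProb ν (u :: w :: t) : ℝ≥0∞) = (p : ℝ≥0∞) * q := by
      push_cast [trajProb_cons_cons, hstep]; rfl
    rw [hcast]
    have hrhs : 2 / (p : ℝ≥0∞) * ((n : ℝ≥0∞) / (q : ℝ≥0∞)) =
        (2 * n) / ((p : ℝ≥0∞) * q) := by
      rw [div_eq_mul_inv, div_eq_mul_inv, div_eq_mul_inv, ENNReal.mul_inv (Or.inl hp0) (Or.inl hpt)]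
      ring
    rw [hrhs]
    have hlen : ((u :: w :: t).length : ℝ≥0∞) ≤ 2 * n := by
      have : (u :: w :: t).length = n + 1 := by simp [hn]
      rw [this]
      push_cast
      have hn1 : (1 : ℝ≥0∞) ≤ n := by
        have : 1 ≤ (w :: t).length := by simp
        exact_mod_cast this
      calc (n : ℝ≥0∞) + 1 ≤ n + n := by exact add_le_add le_rfl hn1
        _ = 2 * n := by ring
    exact ENNReal.div_le_div_right hlen _
  calc properTime ν u v ≤ ⨅ h ∈ {h : List S | h.head? = some w ∧ h.getLast? = some v ∧
        0 < trajProb ν h}, 2 / (p : ℝ≥0∞) * ((h.length : ℝ≥0∞) / (trajProb ν h : ℝ≥0∞)) :=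
      le_iInf₂ key
    _ = 2 / (p : ℝ≥0∞) * properTime ν w v := by
      rw [properTime]
      simp_rw [ENNReal.mul_iInf_of_ne ha0 hat]
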